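/- Let G be a finite simple graph with adjacency matrix A. Then the number of 5-cycles satisfies |C_5| = (1/10)·tr(A⁵) − 3|C_3| − |S_{T1S}|, where |C_3| is the number of triangles and |S_{T1S}| is the number of triangles with one pendant edge (tadpole on 4 vertices). -/

import Mathlib

open Finset BigOperators Matrix SimpleGraph

noncomputable section

variable {V : Type*} [Fintype V] [DecidableEq V]

/-- Number of labelled (ordered) paths with `n` edges (`n+1` distinct vertices). -/
def labPath (G : SimpleGraph V) [DecidableRel G.Adj] (n : ℕ) : ℕ :=
  (univ.filter (fun f : Fin (n + 1) → V =>
    Function.Injective f ∧ ∀ i : Fin n, G.Adj (f i.castSucc) (f i.succ))).card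

/-- Number of edges, as a real number. -/
def p1 (G : SimpleGraph V) [DecidableRel G.Adj] : ℝ := G.edgeFinset.card

/-- Number of paths of length two (`P_2`, path on 3 vertices). -/
def p2 (G : SimpleGraph V) [DecidableRel G.Adj] : ℝ := (labPath G 2 : ℝ) / 2

/-- Number of paths of length three (`P_3`, path on 4 vertices). -/
def p3 (G : SimpleGraph V) [DecidableRel G.Adj] : ℝ := (labPath G 3 : ℝ) / 2

/-- Number of paths of length four (`P_4`, path on 5 vertices). -/
def p4 (G : SimpleGraph V) [DecidableRel G.Adj] : ℝ := (labPath G 4 : ℝ) / 2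

/-- Number of triangles. -/
def c3 (G : SimpleGraph V) [DecidableRel G.Adj] : ℝ :=
  ((univ.filter (fun f : Fin 3 → V => Function.Injective f ∧
    G.Adj (f 0) (f 1) ∧ G.Adj (f 1) (f 2) ∧ G.Adj (f 2) (f 0))).card : ℝ) / 6

/-- Number of 4-cycles. -/
def c4 (G : SimpleGraph V) [DecidableRel G.Adj] : ℝ :=
  ((univ.filter (fun f : Fin 4 → V => Function.Injective f ∧
    G.Adj (f 0) (f 1) ∧ G.Adj (f 1) (f 2) ∧ G.Adj (f 2) (f 3) ∧ G.Adj (f 3) (f 0))).card : ℝ) / 8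

/-- Number of 5-cycles. -/
def c5 (G : SimpleGraph V) [DecidableRel G.Adj] : ℝ :=
  ((univ.filter (fun f : Fin 5 → V => Function.Injective f ∧
    G.Adj (f 0) (f 1) ∧ G.Adj (f 1) (f 2) ∧ G.Adj (f 2) (f 3) ∧ G.Adj (f 3) (f 4) ∧
    G.Adj (f 4) (f 0))).card : ℝ) / 10

/-- Number of stars `S_{1,3}`: a center `f 0` adjacent to three leaves. -/
def s13 (G : SimpleGraph V) [DecidableRel G.Adj] : ℝ :=
  ((univ.filter (fun f : Fin 4 → V => Function.Injective f ∧
    G.Adj (f 0) (f 1) ∧ G.Adj (f 0) (f 2) ∧ G.Adj (f 0) (f 3))).card : ℝ) / 6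

/-- Number of tadpoles `S_{T1S}`: a triangle `f 0, f 1, f 2` with one pendant edge `f 0 – f 3`. -/
def sT1S (G : SimpleGraph V) [DecidableRel G.Adj] : ℝ :=
  ((univ.filter (fun f : Fin 4 → V => Function.Injective f ∧
    G.Adj (f 0) (f 1) ∧ G.Adj (f 1) (f 2) ∧ G.Adj (f 2) (f 0) ∧
    G.Adj (f 0) (f 3))).card : ℝ) / 2

/-- Number of `S_{T2S}`: a triangle `f 0, f 1, f 2` with two pendant edges at `f 0`. -/
def sT2S (G : SimpleGraph V) [DecidableRel G.Adj] : ℝ :=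
  ((univ.filter (fun f : Fin 5 → V => Function.Injective f ∧
    G.Adj (f 0) (f 1) ∧ G.Adj (f 1) (f 2) ∧ G.Adj (f 2) (f 0) ∧
    G.Adj (f 0) (f 3) ∧ G.Adj (f 0) (f 4))).card : ℝ) / 4

/-- Number of `S_Y` (the 'chair'/fork tree on 5 vertices): an edge `f 0 – f 1`,
two further neighbours `f 2, f 3` of `f 0` and one further neighbour `f 4` of `f 1`. -/
def sY (G : SimpleGraph V) [DecidableRel G.Adj] : ℝ :=
  ((univ.filter (fun f : Fin 5 → V => Function.Injective f ∧
    G.Adj (f 0) (f 1) ∧ G.Adj (f 0) (f 2) ∧ G.Adj (f 0) (f 3) ∧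
    G.Adj (f 1) (f 4))).card : ℝ) / 2

namespace C5Aux

lemma sum_pi_succ {α : Type*} [Fintype α] {n : ℕ} (g : (Fin (n+1) → α) → ℝ) :
    ∑ f : Fin (n+1) → α, g f = ∑ a : α, ∑ f : Fin n → α, g (Fin.cons a f) := by
  rw [← (Fin.consEquiv (fun _ : Fin (n+1) => α)).sum_comp g, Fintype.sum_prod_type]
  rfl

lemma sum_pi5 {α : Type*} [Fintype α] (g : (Fin 5 → α) → ℝ) :
    ∑ f : Fin 5 → α, g f = ∑ a, ∑ b, ∑ c, ∑ d, ∑ e, g ![a,b,c,d,e] := by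
  rw [sum_pi_succ]
  refine Finset.sum_congr rfl fun a _ => ?_
  rw [sum_pi_succ]
  refine Finset.sum_congr rfl fun b _ => ?_
  rw [sum_pi_succ]
  refine Finset.sum_congr rfl fun c _ => ?_
  rw [sum_pi_succ]
  refine Finset.sum_congr rfl fun d _ => ?_
  rw [sum_pi_succ]
  refine Finset.sum_congr rfl fun e _ => ?_
  rw [Fintype.sum_subsingleton _ ![]]; rfl

set_option linter.unusedSectionVars false

lemma inj5 {f : Fin 5 → V} (h01 : f 0 ≠ f 1) (h12 : f 1 ≠ f 2) (h23 : f 2 ≠ f 3)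
    (h34 : f 3 ≠ f 4) (h40 : f 4 ≠ f 0) (h02 : f 0 ≠ f 2) (h13 : f 1 ≠ f 3)
    (h24 : f 2 ≠ f 4) (h30 : f 3 ≠ f 0) (h41 : f 4 ≠ f 1) : Function.Injective f := by
  intro i j h
  fin_cases i <;> fin_cases j <;> simp_all

lemma inj4 {x0 x1 x2 x3 : V} (h01 : x0 ≠ x1) (h02 : x0 ≠ x2) (h03 : x0 ≠ x3)
    (h12 : x1 ≠ x2) (h13 : x1 ≠ x3) (h23 : x2 ≠ x3) :
    Function.Injective ![x0, x1, x2, x3] := by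
  intro i j h
  fin_cases i <;> fin_cases j <;> simp_all

lemma inj3 {x0 x1 x2 : V} (h01 : x0 ≠ x1) (h02 : x0 ≠ x2) (h12 : x1 ≠ x2) :
    Function.Injective ![x0, x1, x2] := by
  intro i j h
  fin_cases i <;> fin_cases j <;> simp_all

lemma inj_iff (f : Fin 5 → V) (h01 : f 0 ≠ f 1) (h12 : f 1 ≠ f 2) (h23 : f 2 ≠ f 3)
    (h34 : f 3 ≠ f 4) (h40 : f 4 ≠ f 0) :
    Function.Injective f ↔
      (¬ f 0 = f 2 ∧ ¬ f 1 = f 3 ∧ ¬ f 2 = f 4 ∧ ¬ f 3 = f 0 ∧ ¬ f 4 = f 1) := by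
  constructor
  · intro h
    exact ⟨fun e => absurd (h e) (by decide), fun e => absurd (h e) (by decide),
      fun e => absurd (h e) (by decide), fun e => absurd (h e) (by decide),
      fun e => absurd (h e) (by decide)⟩
  · rintro ⟨n02, n13, n24, n30, n41⟩
    exact inj5 h01 h12 h23 h34 h40 n02 n13 n24 n30 n41

variable (G : SimpleGraph V) [DecidableRel G.Adj]

/-- The set of closed 5-walks. -/
def cw : Finset (Fin 5 → V) :=
  univ.filter (fun f => G.Adj (f 0) (f 1) ∧ G.Adj (f 1) (f 2) ∧ G.Adj (f 2) (f 3) ∧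
    G.Adj (f 3) (f 4) ∧ G.Adj (f 4) (f 0))

lemma trace_eq : Matrix.trace (G.adjMatrix ℝ ^ 5) = ((cw G).card : ℝ) := by
  rw [cw, Finset.card_filter]
  push_cast
  rw [sum_pi5]
  simp only [pow_succ', pow_zero, Matrix.mul_one, Matrix.trace, Matrix.diag, Matrix.mul_apply,
    Finset.mul_sum, Finset.sum_mul, SimpleGraph.adjMatrix_apply, ite_mul, one_mul, zero_mul,
    mul_ite, mul_one, mul_zero]
  refine Finset.sum_congr rfl fun a _ => Finset.sum_congr rfl fun b _ =>
    Finset.sum_congr rfl fun c _ => Finset.sum_congr rfl fun d _ =>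
    Finset.sum_congr rfl fun e _ => ?_
  simp only [Matrix.cons_val_zero, Matrix.cons_val_one, Matrix.head_cons, Matrix.cons_val_two,
    Matrix.tail_cons, Matrix.cons_val_three, Matrix.cons_val_four]
  split_ifs <;> tauto

lemma classify (f : Fin 5 → V) (h01 : G.Adj (f 0) (f 1)) (h12 : G.Adj (f 1) (f 2))
    (h23 : G.Adj (f 2) (f 3)) (h34 : G.Adj (f 3) (f 4)) (h40 : G.Adj (f 4) (f 0)) :
    (1 : ℕ) = (if Function.Injective f then 1 else 0)
      + ((if f 0 = f 2 ∧ ¬ f 1 = f 3 ∧ ¬ f 4 = f 1 then 1 else 0)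
        + (if f 1 = f 3 ∧ ¬ f 2 = f 4 ∧ ¬ f 0 = f 2 then 1 else 0)
        + (if f 2 = f 4 ∧ ¬ f 3 = f 0 ∧ ¬ f 1 = f 3 then 1 else 0)
        + (if f 3 = f 0 ∧ ¬ f 4 = f 1 ∧ ¬ f 2 = f 4 then 1 else 0)
        + (if f 4 = f 1 ∧ ¬ f 0 = f 2 ∧ ¬ f 3 = f 0 then 1 else 0))
      + ((if f 0 = f 2 ∧ f 1 = f 3 then 1 else 0)
        + (if f 1 = f 3 ∧ f 2 = f 4 then 1 else 0)
        + (if f 2 = f 4 ∧ f 3 = f 0 then 1 else 0)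
        + (if f 3 = f 0 ∧ f 4 = f 1 then 1 else 0)
        + (if f 4 = f 1 ∧ f 0 = f 2 then 1 else 0)) := by
  have n01 := h01.ne
  have n12 := h12.ne
  have n23 := h23.ne
  have n34 := h34.ne
  have n40 := h40.ne
  rw [if_congr (inj_iff f n01 n12 n23 n34 n40) rfl rfl]
  by_cases e0 : f 0 = f 2 <;> by_cases e1 : f 1 = f 3 <;> by_cases e2 : f 2 = f 4 <;>
    by_cases e3 : f 3 = f 0 <;> by_cases e4 : f 4 = f 1 <;>
    first
      | exact absurd (e0.trans e2).symm n40
      | exact absurd (e1.trans e3).symm n01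
      | exact absurd (e2.trans e4).symm n12
      | exact absurd (e3.trans e0).symm n23
      | exact absurd (e4.trans e1).symm n34
      | simp_all

def rot (f : Fin 5 → V) : Fin 5 → V := fun i => f (i + 1)

def unrot (f : Fin 5 → V) : Fin 5 → V := fun i => f (i - 1)

lemma unrot_rot (f : Fin 5 → V) : unrot (rot f) = f := by
  funext i; show f (i - 1 + 1) = f i; rw [sub_add_cancel]

lemma rot_unrot (f : Fin 5 → V) : rot (unrot f) = f := by
  funext i; show f (i + 1 - 1) = f i; rw [add_sub_cancel_right]

lemma card_rot (p : (Fin 5 → V) → Prop) [DecidablePred p] :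
    ((cw G).filter (fun f => p (rot f))).card = ((cw G).filter p).card := by
  refine Finset.card_nbij' rot unrot ?_ ?_ ?_ ?_
  · intro f hf
    simp only [cw, Finset.mem_coe, Finset.mem_filter, Finset.mem_univ, true_and] at hf ⊢
    obtain ⟨⟨a1, a2, a3, a4, a5⟩, hp⟩ := hf
    exact ⟨⟨a2, a3, a4, a5, a1⟩, hp⟩
  · intro g hg
    simp only [cw, Finset.mem_coe, Finset.mem_filter, Finset.mem_univ, true_and] at hg ⊢
    obtain ⟨⟨a1, a2, a3, a4, a5⟩, hp⟩ := hg
    refine ⟨⟨a5, a1, a2, a3, a4⟩, ?_⟩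
    rw [rot_unrot]; exact hp
  · intro f _; rw [unrot_rot]
  · intro g _; rw [rot_unrot]

lemma cardS0 :
    ((cw G).filter (fun f => f 0 = f 2 ∧ ¬ f 1 = f 3 ∧ ¬ f 4 = f 1)).card
      = (univ.filter (fun g : Fin 4 → V => Function.Injective g ∧
          G.Adj (g 0) (g 1) ∧ G.Adj (g 1) (g 2) ∧ G.Adj (g 2) (g 0) ∧
          G.Adj (g 0) (g 3))).card := by
  refine Finset.card_nbij' (fun f => ![f 0, f 3, f 4, f 1]) (fun g => ![g 0, g 3, g 0, g 1, g 2])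
    ?_ ?_ ?_ ?_
  · intro f hf
    simp only [cw, Finset.mem_coe, Finset.mem_filter, Finset.mem_univ, true_and] at hf ⊢
    obtain ⟨⟨a01, a12, a23, a34, a40⟩, e0, n13, n41⟩ := hf
    have a03 : G.Adj (f 0) (f 3) := e0 ▸ a23
    refine ⟨?_, ?_, ?_, ?_, ?_⟩
    · exact inj4 a03.ne (fun h => a40.ne (h.symm)) a01.ne a34.ne
        (fun h => n13 h.symm) (fun h => n41 h)
    · simpa using a03
    · simpa using a34
    · simpa using a40
    · simpa using a01
  · intro g hg
    simp only [cw, Finset.mem_coe, Finset.mem_filter, Finset.mem_univ, true_and] at hg ⊢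
    obtain ⟨ginj, b01, b12, b20, b03⟩ := hg
    refine ⟨⟨?_, ?_, ?_, ?_, ?_⟩, ?_, ?_, ?_⟩
    · simpa using b03
    · simpa using b03.symm
    · simpa using b01
    · simpa using b12
    · simpa using b20
    · simp
    · simpa using fun h => absurd (ginj h) (by decide)
    · simpa using fun h => absurd (ginj h) (by decide)
  · intro f hf
    simp only [cw, Finset.mem_coe, Finset.mem_filter, Finset.mem_univ, true_and] at hf
    obtain ⟨-, e0, -, -⟩ := hf
    funext i
    fin_cases i <;> simp_all
  · intro g _
    funext i
    fin_cases i <;> simp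

lemma cardT0 :
    ((cw G).filter (fun f => f 0 = f 2 ∧ f 1 = f 3)).card
      = (univ.filter (fun g : Fin 3 → V => Function.Injective g ∧
          G.Adj (g 0) (g 1) ∧ G.Adj (g 1) (g 2) ∧ G.Adj (g 2) (g 0))).card := by
  refine Finset.card_nbij' (fun f => ![f 0, f 1, f 4]) (fun g => ![g 0, g 1, g 0, g 1, g 2])
    ?_ ?_ ?_ ?_
  · intro f hf
    simp only [cw, Finset.mem_coe, Finset.mem_filter, Finset.mem_univ, true_and] at hf ⊢
    obtain ⟨⟨a01, a12, a23, a34, a40⟩, e0, e1⟩ := hf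
    have a14 : G.Adj (f 1) (f 4) := e1 ▸ a34
    refine ⟨?_, ?_, ?_, ?_⟩
    · exact inj3 a01.ne (fun h => a40.ne h.symm) a14.ne
    · simpa using a01
    · simpa using a14
    · simpa using a40
  · intro g hg
    simp only [cw, Finset.mem_coe, Finset.mem_filter, Finset.mem_univ, true_and] at hg ⊢
    obtain ⟨ginj, b01, b12, b20⟩ := hg
    refine ⟨⟨?_, ?_, ?_, ?_, ?_⟩, ?_, ?_⟩
    · simpa using b01
    · simpa using b01.symm
    · simpa using b01
    · simpa using b12
    · simpa using b20
    · simp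
    · simp
  · intro f hf
    simp only [cw, Finset.mem_coe, Finset.mem_filter, Finset.mem_univ, true_and] at hf
    obtain ⟨-, e0, e1⟩ := hf
    funext i
    fin_cases i <;> simp_all
  · intro g _
    funext i
    fin_cases i <;> simp

lemma cardS (sT1Snum : ℕ)
    (h0 : ((cw G).filter (fun f => f 0 = f 2 ∧ ¬ f 1 = f 3 ∧ ¬ f 4 = f 1)).card = sT1Snum) :
    ((cw G).filter (fun f => f 1 = f 3 ∧ ¬ f 2 = f 4 ∧ ¬ f 0 = f 2)).card = sT1Snum
    ∧ ((cw G).filter (fun f => f 2 = f 4 ∧ ¬ f 3 = f 0 ∧ ¬ f 1 = f 3)).card = sT1Snum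
    ∧ ((cw G).filter (fun f => f 3 = f 0 ∧ ¬ f 4 = f 1 ∧ ¬ f 2 = f 4)).card = sT1Snum
    ∧ ((cw G).filter (fun f => f 4 = f 1 ∧ ¬ f 0 = f 2 ∧ ¬ f 3 = f 0)).card = sT1Snum := by
  have h1 : ((cw G).filter (fun f => f 1 = f 3 ∧ ¬ f 2 = f 4 ∧ ¬ f 0 = f 2)).card = sT1Snum :=
    (card_rot G (fun f => f 0 = f 2 ∧ ¬ f 1 = f 3 ∧ ¬ f 4 = f 1)).trans h0
  have h2 : ((cw G).filter (fun f => f 2 = f 4 ∧ ¬ f 3 = f 0 ∧ ¬ f 1 = f 3)).card = sT1Snum :=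
    (card_rot G (fun f => f 1 = f 3 ∧ ¬ f 2 = f 4 ∧ ¬ f 0 = f 2)).trans h1
  have h3 : ((cw G).filter (fun f => f 3 = f 0 ∧ ¬ f 4 = f 1 ∧ ¬ f 2 = f 4)).card = sT1Snum :=
    (card_rot G (fun f => f 2 = f 4 ∧ ¬ f 3 = f 0 ∧ ¬ f 1 = f 3)).trans h2
  have h4 : ((cw G).filter (fun f => f 4 = f 1 ∧ ¬ f 0 = f 2 ∧ ¬ f 3 = f 0)).card = sT1Snum :=
    (card_rot G (fun f => f 3 = f 0 ∧ ¬ f 4 = f 1 ∧ ¬ f 2 = f 4)).trans h3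
  exact ⟨h1, h2, h3, h4⟩

lemma cardT (c3num : ℕ)
    (h0 : ((cw G).filter (fun f => f 0 = f 2 ∧ f 1 = f 3)).card = c3num) :
    ((cw G).filter (fun f => f 1 = f 3 ∧ f 2 = f 4)).card = c3num
    ∧ ((cw G).filter (fun f => f 2 = f 4 ∧ f 3 = f 0)).card = c3num
    ∧ ((cw G).filter (fun f => f 3 = f 0 ∧ f 4 = f 1)).card = c3num
    ∧ ((cw G).filter (fun f => f 4 = f 1 ∧ f 0 = f 2)).card = c3num := by
  have h1 : ((cw G).filter (fun f => f 1 = f 3 ∧ f 2 = f 4)).card = c3num :=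
    (card_rot G (fun f => f 0 = f 2 ∧ f 1 = f 3)).trans h0
  have h2 : ((cw G).filter (fun f => f 2 = f 4 ∧ f 3 = f 0)).card = c3num :=
    (card_rot G (fun f => f 1 = f 3 ∧ f 2 = f 4)).trans h1
  have h3 : ((cw G).filter (fun f => f 3 = f 0 ∧ f 4 = f 1)).card = c3num :=
    (card_rot G (fun f => f 2 = f 4 ∧ f 3 = f 0)).trans h2
  have h4 : ((cw G).filter (fun f => f 4 = f 1 ∧ f 0 = f 2)).card = c3num :=
    (card_rot G (fun f => f 3 = f 0 ∧ f 4 = f 1)).trans h3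
  exact ⟨h1, h2, h3, h4⟩

lemma card_inj :
    ((cw G).filter (fun f => Function.Injective f)).card
      = (univ.filter (fun f : Fin 5 → V => Function.Injective f ∧
          G.Adj (f 0) (f 1) ∧ G.Adj (f 1) (f 2) ∧ G.Adj (f 2) (f 3) ∧ G.Adj (f 3) (f 4) ∧
          G.Adj (f 4) (f 0))).card := by
  rw [cw, Finset.filter_filter]
  congr 1
  apply Finset.filter_congr
  intro f _
  tauto

lemma count :
    (cw G).card
      = (univ.filter (fun f : Fin 5 → V => Function.Injective f ∧
          G.Adj (f 0) (f 1) ∧ G.Adj (f 1) (f 2) ∧ G.Adj (f 2) (f 3) ∧ G.Adj (f 3) (f 4) ∧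
          G.Adj (f 4) (f 0))).card
        + 5 * (univ.filter (fun g : Fin 4 → V => Function.Injective g ∧
            G.Adj (g 0) (g 1) ∧ G.Adj (g 1) (g 2) ∧ G.Adj (g 2) (g 0) ∧
            G.Adj (g 0) (g 3))).card
        + 5 * (univ.filter (fun g : Fin 3 → V => Function.Injective g ∧
            G.Adj (g 0) (g 1) ∧ G.Adj (g 1) (g 2) ∧ G.Adj (g 2) (g 0))).card := by
  obtain ⟨hS1, hS2, hS3, hS4⟩ := cardS G _ (cardS0 G)
  obtain ⟨hT1, hT2, hT3, hT4⟩ := cardT G _ (cardT0 G)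
  have h : (cw G).card = ∑ f ∈ cw G, (1 : ℕ) := by simp
  rw [h]
  rw [Finset.sum_congr rfl (fun f hf => by
    simp only [cw, Finset.mem_filter, Finset.mem_univ, true_and] at hf
    exact classify G f hf.1 hf.2.1 hf.2.2.1 hf.2.2.2.1 hf.2.2.2.2)]
  simp only [Finset.sum_add_distrib, ← Finset.card_filter]
  rw [card_inj G, cardS0 G, hS1, hS2, hS3, hS4, cardT0 G, hT1, hT2, hT3, hT4]
  ring

end C5Aux


/-- `|C_5| = (1/10)·tr(A⁵) − 3|C_3| − |S_{T1S}|`. -/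
theorem c5_eq (G : SimpleGraph V) [DecidableRel G.Adj] :
    c5 G = (1 / 10) * Matrix.trace (G.adjMatrix ℝ ^ 5) - 3 * c3 G - sT1S G := by
  have key : ((C5Aux.cw G).card : ℝ)
      = ((univ.filter (fun f : Fin 5 → V => Function.Injective f ∧
          G.Adj (f 0) (f 1) ∧ G.Adj (f 1) (f 2) ∧ G.Adj (f 2) (f 3) ∧ G.Adj (f 3) (f 4) ∧
          G.Adj (f 4) (f 0))).card : ℝ)
        + 5 * ((univ.filter (fun g : Fin 4 → V => Function.Injective g ∧
            G.Adj (g 0) (g 1) ∧ G.Adj (g 1) (g 2) ∧ G.Adj (g 2) (g 0) ∧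
            G.Adj (g 0) (g 3))).card : ℝ)
        + 5 * ((univ.filter (fun g : Fin 3 → V => Function.Injective g ∧
            G.Adj (g 0) (g 1) ∧ G.Adj (g 1) (g 2) ∧ G.Adj (g 2) (g 0))).card : ℝ) := by
    exact_mod_cast congrArg (Nat.cast : ℕ → ℝ) (C5Aux.count G)
  rw [c5, c3, sT1S, C5Aux.trace_eq, key]
  ring
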